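/- Let g be the Lorentzian metric Lie algebra on pseudo-orthonormal basis u1,u2,u3,u4 (⟨u1,u2⟩=⟨u3,u3⟩=⟨u4,u4⟩=1) with brackets [u2,u4]=−(γ2−1)u3 and [u3,u4]=(γ2+1)u1. Then u1 is a parallel null vector: ∇_x u1 = 0 for all x ∈ g, where ∇ is the Levi-Civita connection determined by the Koszul formula. -/
import Mathlib


noncomputable section

open Finset Polynomial

abbrev V : Type := Fin 4 → ℝ

def e (i : Fin 4) : V := Pi.single i 1

/-- bilinear bracket determined by structure constants `c`. -/
def br (c : Fin 4 → Fin 4 → V) (x y : V) : V :=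
  ∑ i : Fin 4, ∑ j : Fin 4, (x i * y j) • c i j

/-- bilinear form determined by the matrix `G`. -/
def gmet (G : Matrix (Fin 4) (Fin 4) ℝ) (x y : V) : ℝ :=
  ∑ i : Fin 4, ∑ j : Fin 4, x i * y j * G i j

/-- `D` satisfies the Koszul formula of the Levi-Civita connection. -/
def Koszul (G : Matrix (Fin 4) (Fin 4) ℝ) (c : Fin 4 → Fin 4 → V) (D : V → V → V) : Prop :=
  ∀ x y z : V, 2 * gmet G (D x y) z =
    gmet G (br c x y) z - gmet G (br c y z) x + gmet G (br c z x) y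

/-- curvature tensor `R(x,y)z`. -/
def Rcurv (c : Fin 4 → Fin 4 → V) (D : V → V → V) (x y z : V) : V :=
  D x (D y z) - D y (D x z) - D (br c x y) z

/-- Ricci tensor `ρ(x,y) = tr (z ↦ R(z,x)y)`. -/
def ricciT (c : Fin 4 → Fin 4 → V) (D : V → V → V) (x y : V) : ℝ :=
  ∑ i : Fin 4, Rcurv c D (e i) x y i

/-- scalar curvature: metric trace of the Ricci tensor (here `G` is its own inverse). -/
def scalCurv (G : Matrix (Fin 4) (Fin 4) ℝ) (c : Fin 4 → Fin 4 → V) (D : V → V → V) : ℝ :=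
  ∑ i : Fin 4, ∑ j : Fin 4, G i j * ricciT c D (e i) (e j)

/-- metric with ⟨u1,u2⟩=⟨u3,u3⟩=⟨u4,u4⟩=1. -/
def Gpp : Matrix (Fin 4) (Fin 4) ℝ := !![0,1,0,0; 1,0,0,0; 0,0,1,0; 0,0,0,1]

/-- metric with ⟨u1,u1⟩=⟨u2,u2⟩=⟨u3,u4⟩=1. -/
def Gdeg : Matrix (Fin 4) (Fin 4) ℝ := !![1,0,0,0; 0,1,0,0; 0,0,0,1; 0,0,1,0]

/-- orthonormal metric with e4 timelike. -/
def Gort : Matrix (Fin 4) (Fin 4) ℝ := !![1,0,0,0; 0,1,0,0; 0,0,1,0; 0,0,0,-1]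

def c8 (g2 : ℝ) : Fin 4 → Fin 4 → V :=
  let b24 : V := ![0, 0, -(g2 - 1), 0]
  let b34 : V := ![g2 + 1, 0, 0, 0]
  ![![0, 0, 0, 0],
    ![0, 0, 0, b24],
    ![0, 0, 0, b34],
    ![0, -b24, -b34, 0]]

/-- u1 is a parallel null vector. -/
theorem stmt8 (g2 : ℝ) (D : V → V → V) (hD : Koszul Gpp (c8 g2) D) :
    gmet Gpp (e 0) (e 0) = 0 ∧ ∀ x : V, D x (e 0) = 0 := by
  constructor
  · simp [gmet, e, Gpp, Fin.sum_univ_four, Pi.single_apply]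
  · intro x
    have h0 : ∀ z : V, gmet Gpp (D x (e 0)) z = 0 := by
      intro z
      have h := hD x (e 0) z
      have hr : gmet Gpp (br (c8 g2) x (e 0)) z - gmet Gpp (br (c8 g2) (e 0) z) x
          + gmet Gpp (br (c8 g2) z x) (e 0) = 0 := by
        simp [br, gmet, c8, e, Gpp, Fin.sum_univ_four, Pi.single_apply, Matrix.vecHead, Matrix.vecTail]
      rw [hr] at h
      linarith
    funext j
    fin_cases j
    · have := h0 (e 1)
      simpa [gmet, e, Gpp, Fin.sum_univ_four, Pi.single_apply, Matrix.vecHead, Matrix.vecTail] using this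
    · have := h0 (e 0)
      simpa [gmet, e, Gpp, Fin.sum_univ_four, Pi.single_apply, Matrix.vecHead, Matrix.vecTail] using this
    · have := h0 (e 2)
      simpa [gmet, e, Gpp, Fin.sum_univ_four, Pi.single_apply, Matrix.vecHead, Matrix.vecTail] using this
    · have := h0 (e 3)
      simpa [gmet, e, Gpp, Fin.sum_univ_four, Pi.single_apply, Matrix.vecHead, Matrix.vecTail] using this
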